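/- arXiv:math/0104167 — 2 statements merged into one kernel-verified Lean document; each statement's English description precedes it below -/
import Mathlib

section
/- Let c be an element of H_ℚ ⊗̂_{R_ℚ} H_ℚ that is symmetric, i.e. τ(c) = c where τ is the flip of the two tensor factors. If c satisfies (i) (id ⊗ Δ)c + 1⊗c − (Δ ⊗ id)c − c⊗1 = 0 in H_ℚ ⊗ H_ℚ ⊗ H_ℚ and (ii) (id ⊗ ε)c = 0 = (ε ⊗ id)c, then the symmetric series c + x⊗1 + 1⊗x is a commutative formal group over the Hopf algebra H_ℚ (it satisfies the unit, associativity and commutativity axioms). -/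
open scoped TensorProduct

noncomputable section

namespace FGHopf

variable {A B : Type*} [CommRing A] [CommRing B] {σ : Type*}

/-- Apply a map to all coefficients of a (multivariate) power series. -/
def mapCoeffs (f : A → B) (F : MvPowerSeries σ A) : MvPowerSeries σ B :=
  fun m => f (F m)

/-- Substitution of two power series `G`, `K` into a two-variable power series `w`
(the mathematically correct substitution whenever the relevant family of coefficients
is finitely supported, e.g. when `G` and `K` have zero constant term or `w` is a
polynomial). -/
def subst2 (w : MvPowerSeries (Fin 2) A) (G K : MvPowerSeries σ A) :
    MvPowerSeries σ A :=
  fun m => ∑ᶠ p : ℕ × ℕ,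
    MvPowerSeries.coeff (R := A) (Finsupp.single 0 p.1 + Finsupp.single 1 p.2) w *
      MvPowerSeries.coeff (R := A) m (G ^ p.1 * K ^ p.2)

/-- Substitution of a power series `G` into a one-variable power series `w`. -/
def subst1 (w : PowerSeries A) (G : MvPowerSeries σ A) : MvPowerSeries σ A :=
  fun m => ∑ᶠ n : ℕ, PowerSeries.coeff (R := A) n w * MvPowerSeries.coeff (R := A) m (G ^ n)

/-- Regard a two-variable series as a three-variable series in the first two variables,
mapping its coefficients by `f`. -/
def emb12 (f : A → B) (F : MvPowerSeries (Fin 2) A) : MvPowerSeries (Fin 3) B :=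
  fun m => if m 2 = 0 then
    f (F (Finsupp.single 0 (m 0) + Finsupp.single 1 (m 1))) else 0

/-- Regard a two-variable series as a three-variable series in the last two variables,
mapping its coefficients by `f`. -/
def emb23 (f : A → B) (F : MvPowerSeries (Fin 2) A) : MvPowerSeries (Fin 3) B :=
  fun m => if m 0 = 0 then
    f (F (Finsupp.single 0 (m 1) + Finsupp.single 1 (m 2))) else 0

/-- Regard a one-variable series as a two-variable series in the first variable `x⊗1`,
mapping its coefficients by `f`. -/
def inVar0 (f : A → B) (g : PowerSeries A) : MvPowerSeries (Fin 2) B :=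
  fun m => if m 1 = 0 then f (PowerSeries.coeff (R := A) (m 0) g) else 0

/-- Regard a one-variable series as a two-variable series in the second variable `1⊗x`,
mapping its coefficients by `f`. -/
def inVar1 (f : A → B) (g : PowerSeries A) : MvPowerSeries (Fin 2) B :=
  fun m => if m 0 = 0 then f (PowerSeries.coeff (R := A) (m 1) g) else 0

/-- Formal partial derivative of a multivariate power series with respect to the `i`-th
variable. -/
def pderiv (i : σ) (F : MvPowerSeries σ A) : MvPowerSeries σ A :=
  fun m => ((m i + 1 : ℕ) : A) * F (m + Finsupp.single i 1)

variable (R : Type*) [CommRing R] (H : Type*) [CommRing H] [HopfAlgebra R H]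

/-- `id ⊗ ε : H ⊗ H → H`. -/
def idCounit : H ⊗[R] H →ₗ[R] H :=
  (TensorProduct.rid R H).toLinearMap ∘ₗ
    LinearMap.lTensor H (Coalgebra.counit (R := R) (A := H))

/-- `ε ⊗ id : H ⊗ H → H`. -/
def counitId : H ⊗[R] H →ₗ[R] H :=
  (TensorProduct.lid R H).toLinearMap ∘ₗ
    LinearMap.rTensor H (Coalgebra.counit (R := R) (A := H))

/-- `Δ ⊗ id : H ⊗ H → H ⊗ H ⊗ H` (with the rightmost association). -/
def comulLeftTensor : H ⊗[R] H →ₗ[R] H ⊗[R] (H ⊗[R] H) :=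
  (TensorProduct.assoc R H H H).toLinearMap ∘ₗ
    LinearMap.rTensor H (Coalgebra.comul (R := R) (A := H))

/-- `id ⊗ Δ : H ⊗ H → H ⊗ H ⊗ H`. -/
def idTensorComul : H ⊗[R] H →ₗ[R] H ⊗[R] (H ⊗[R] H) :=
  LinearMap.lTensor H (Coalgebra.comul (R := R) (A := H))

/-- `a ↦ a ⊗ 1 : H ⊗ H → H ⊗ H ⊗ H`. -/
def incl12 : H ⊗[R] H →ₗ[R] H ⊗[R] (H ⊗[R] H) :=
  LinearMap.lTensor H ((TensorProduct.mk R H H).flip 1)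

/-- `a ↦ 1 ⊗ a : H ⊗ H → H ⊗ H ⊗ H`. -/
def incl23 : H ⊗[R] H →ₗ[R] H ⊗[R] (H ⊗[R] H) :=
  TensorProduct.mk R H (H ⊗[R] H) 1

/-- The flip `τ` of the two tensor factors of `H ⊗ H`. -/
def tau : H ⊗[R] H →ₗ[R] H ⊗[R] H := (TensorProduct.comm R H H).toLinearMap

/-- The unit axiom for a formal group `F` over the Hopf algebra `H`: applying `id ⊗ ε`
to all coefficients and setting the second variable to `0` yields the series `x`, and
symmetrically. -/
def UnitAxiom (F : MvPowerSeries (Fin 2) (H ⊗[R] H)) : Prop :=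
  (∀ n : ℕ, idCounit R H (F (Finsupp.single 0 n)) = if n = 1 then 1 else 0) ∧
  (∀ n : ℕ, counitId R H (F (Finsupp.single 1 n)) = if n = 1 then 1 else 0)

/-- The associativity axiom for a formal group `F` over the Hopf algebra `H`:
`((Δ ⊗ id)F)(F(x⊗1,1⊗x) ⊗ 1, 1⊗1⊗x) = ((id ⊗ Δ)F)(x⊗1⊗1, 1 ⊗ F(x⊗1,1⊗x))`. -/
def AssocAxiom (F : MvPowerSeries (Fin 2) (H ⊗[R] H)) : Prop :=
  subst2 (mapCoeffs (comulLeftTensor R H) F) (emb12 (incl12 R H) F)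
      (MvPowerSeries.X 2) =
  subst2 (mapCoeffs (idTensorComul R H) F) (MvPowerSeries.X 0)
      (emb23 (incl23 R H) F)

/-- The commutativity axiom: `F` is symmetric, `A_{i,j} = τ(A_{j,i})`. -/
def CommAxiom (F : MvPowerSeries (Fin 2) (H ⊗[R] H)) : Prop :=
  ∀ m : Fin 2 →₀ ℕ,
    F m = tau R H (F (Finsupp.single 0 (m 1) + Finsupp.single 1 (m 0)))

/-- A commutative formal group over the Hopf algebra `H`: a two-variable power series
with coefficients in `H ⊗ H`, with zero constant term, satisfying the unit,
associativity and commutativity axioms. -/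
def IsCommFormalGroup (F : MvPowerSeries (Fin 2) (H ⊗[R] H)) : Prop :=
  F 0 = 0 ∧ UnitAxiom R H F ∧ AssocAxiom R H F ∧ CommAxiom R H F



section Helpers

variable {A B : Type*} [CommRing A] [CommRing B] {σ : Type*}

lemma coeffFun (F : MvPowerSeries σ A) (m : σ →₀ ℕ) : F m = MvPowerSeries.coeff (R := A) m F := rfl

lemma coeff_CXX [DecidableEq σ] (a : A) (i j : σ) (m : σ →₀ ℕ) :
    MvPowerSeries.coeff (R := A) m
      (MvPowerSeries.C (σ := σ) (R := A) a + MvPowerSeries.X i + MvPowerSeries.X j) =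
    (if m = 0 then a else 0) + (if m = Finsupp.single i 1 then 1 else 0)
      + (if m = Finsupp.single j 1 then 1 else 0) := by
  simp [map_add, MvPowerSeries.coeff_C, MvPowerSeries.coeff_X]

lemma pair_eq (a b c d : ℕ) :
    (Finsupp.single (0 : Fin 2) a + Finsupp.single 1 b
      = Finsupp.single 0 c + Finsupp.single 1 d) ↔ (a = c ∧ b = d) := by
  constructor
  · intro h
    refine ⟨?_, ?_⟩
    · have := DFunLike.congr_fun h 0
      simpa [Finsupp.single_apply] using this
    · have := DFunLike.congr_fun h 1
      simpa [Finsupp.single_apply] using this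
  · rintro ⟨rfl, rfl⟩; rfl

lemma pair_eq_zero (a b : ℕ) :
    (Finsupp.single (0 : Fin 2) a + Finsupp.single 1 b = 0) ↔ (a = 0 ∧ b = 0) := by
  rw [show (0 : Fin 2 →₀ ℕ) = Finsupp.single 0 0 + Finsupp.single 1 0 by simp, pair_eq]

lemma pair_eq_s0 (a b : ℕ) :
    (Finsupp.single (0 : Fin 2) a + Finsupp.single 1 b = Finsupp.single 0 1) ↔
      (a = 1 ∧ b = 0) := by
  rw [show (Finsupp.single (0 : Fin 2) 1 : Fin 2 →₀ ℕ)
      = Finsupp.single 0 1 + Finsupp.single 1 0 by simp, pair_eq]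

lemma pair_eq_s1 (a b : ℕ) :
    (Finsupp.single (0 : Fin 2) a + Finsupp.single 1 b = Finsupp.single 1 1) ↔
      (a = 0 ∧ b = 1) := by
  rw [show (Finsupp.single (1 : Fin 2) 1 : Fin 2 →₀ ℕ)
      = Finsupp.single 0 0 + Finsupp.single 1 1 by simp, pair_eq]

lemma fin2_eq_zero (m : Fin 2 →₀ ℕ) : m = 0 ↔ (m 0 = 0 ∧ m 1 = 0) := by
  constructor
  · rintro rfl; simp
  · rintro ⟨h0, h1⟩; ext i; fin_cases i <;> simp_all

lemma fin2_eq_s0 (m : Fin 2 →₀ ℕ) :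
    m = Finsupp.single 0 1 ↔ (m 0 = 1 ∧ m 1 = 0) := by
  constructor
  · rintro rfl; simp [Finsupp.single_apply]
  · rintro ⟨h0, h1⟩; ext i; fin_cases i <;> simp_all [Finsupp.single_apply]

lemma fin2_eq_s1 (m : Fin 2 →₀ ℕ) :
    m = Finsupp.single 1 1 ↔ (m 0 = 0 ∧ m 1 = 1) := by
  constructor
  · rintro rfl; simp [Finsupp.single_apply]
  · rintro ⟨h0, h1⟩; ext i; fin_cases i <;> simp_all [Finsupp.single_apply]

lemma fin3_eq_zero (m : Fin 3 →₀ ℕ) : m = 0 ↔ (m 0 = 0 ∧ m 1 = 0 ∧ m 2 = 0) := by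
  constructor
  · rintro rfl; simp
  · rintro ⟨h0, h1, h2⟩; ext i; fin_cases i <;> simp_all

lemma fin3_eq_s0 (m : Fin 3 →₀ ℕ) :
    m = Finsupp.single 0 1 ↔ (m 0 = 1 ∧ m 1 = 0 ∧ m 2 = 0) := by
  constructor
  · rintro rfl; simp [Finsupp.single_apply]
  · rintro ⟨h0, h1, h2⟩; ext i; fin_cases i <;> simp_all [Finsupp.single_apply]

lemma fin3_eq_s1 (m : Fin 3 →₀ ℕ) :
    m = Finsupp.single 1 1 ↔ (m 0 = 0 ∧ m 1 = 1 ∧ m 2 = 0) := by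
  constructor
  · rintro rfl; simp [Finsupp.single_apply]
  · rintro ⟨h0, h1, h2⟩; ext i; fin_cases i <;> simp_all [Finsupp.single_apply]

lemma fin3_eq_s2 (m : Fin 3 →₀ ℕ) :
    m = Finsupp.single 2 1 ↔ (m 0 = 0 ∧ m 1 = 0 ∧ m 2 = 1) := by
  constructor
  · rintro rfl; simp [Finsupp.single_apply]
  · rintro ⟨h0, h1, h2⟩; ext i; fin_cases i <;> simp_all [Finsupp.single_apply]

lemma subst2_CXX (a : A) (G K : MvPowerSeries σ A) (m : σ →₀ ℕ) :
    subst2 (MvPowerSeries.C (σ := Fin 2) (R := A) a + MvPowerSeries.X 0 + MvPowerSeries.X 1) G K m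
      = a * MvPowerSeries.coeff (R := A) m 1 + MvPowerSeries.coeff (R := A) m G
        + MvPowerSeries.coeff (R := A) m K := by
  have key : ∀ p : ℕ × ℕ,
      MvPowerSeries.coeff (R := A) (Finsupp.single 0 p.1 + Finsupp.single 1 p.2)
        (MvPowerSeries.C (σ := Fin 2) (R := A) a + MvPowerSeries.X 0 + MvPowerSeries.X 1)
      = (if p = ((0 : ℕ), (0 : ℕ)) then a else 0) + (if p = (1, 0) then 1 else 0)
        + (if p = (0, 1) then 1 else 0) := by
    intro p
    rw [coeff_CXX]
    simp only [pair_eq_zero, pair_eq_s0, pair_eq_s1, Prod.ext_iff]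
  show (∑ᶠ p : ℕ × ℕ, _) = _
  rw [finsum_eq_sum_of_support_subset _
      (s := ({((0 : ℕ), (0 : ℕ)), (1, 0), (0, 1)} : Finset (ℕ × ℕ))) ?_]
  · rw [Finset.sum_insert (by decide), Finset.sum_insert (by decide),
      Finset.sum_singleton]
    rw [key, key, key]
    norm_num [Prod.ext_iff]
    ring
  · intro p hp
    simp only [Function.mem_support, ne_eq] at hp
    by_contra hns
    simp only [Finset.coe_insert, Set.mem_insert_iff, Finset.coe_singleton,
      Set.mem_singleton_iff] at hns
    push_neg at hns
    refine hp ?_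
    rw [key, if_neg hns.1, if_neg hns.2.1, if_neg hns.2.2]
    simp

variable (R : Type*) [CommRing R] (H : Type*) [CommRing H] [HopfAlgebra R H]

lemma idCounit_one : idCounit R H 1 = 1 := by
  simp [idCounit, Algebra.TensorProduct.one_def]

lemma counitId_one : counitId R H 1 = 1 := by
  simp [counitId, Algebra.TensorProduct.one_def]

lemma comulLeftTensor_one : comulLeftTensor R H 1 = 1 := by
  simp [comulLeftTensor, Algebra.TensorProduct.one_def]

lemma idTensorComul_one : idTensorComul R H 1 = 1 := by
  simp [idTensorComul, Algebra.TensorProduct.one_def]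

lemma incl12_one : incl12 R H 1 = 1 := by
  simp [incl12, Algebra.TensorProduct.one_def]

lemma incl23_one : incl23 R H 1 = 1 := by
  simp [incl23, Algebra.TensorProduct.one_def]

lemma tau_one : tau R H 1 = 1 := by
  simp [tau, Algebra.TensorProduct.one_def]

end Helpers

/-- if the symmetric element `c` is a counit-normalized 2-cocycle in the
cobar complex of `H_ℚ`, then `c + x⊗1 + 1⊗x` is a commutative formal group over the
Hopf algebra `H_ℚ` (unit, associativity and commutativity axioms). -/
theorem stmt0
    (R : Type*) [CommRing R] [NoZeroSMulDivisors ℤ R]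
    (H : Type*) [CommRing H] [HopfAlgebra R H]
    (Rq : Type*) [CommRing Rq] [Algebra ℚ Rq]
    (Hq : Type*) [CommRing Hq] [HopfAlgebra Rq Hq] [Algebra ℚ Hq]
    [IsScalarTower ℚ Rq Hq]
    (ιR : R →+* Rq) (ι : H →+* Hq) (ιι : H ⊗[R] H →+* Hq ⊗[Rq] Hq)
    (halg : ∀ r : R, ι (algebraMap R H r) = algebraMap Rq Hq (ιR r))
    (hιι : ∀ h k : H, ιι (h ⊗ₜ[R] k) = ι h ⊗ₜ[Rq] ι k)
    (hιε : ∀ h : H, Coalgebra.counit (R := Rq) (ι h) = ιR (Coalgebra.counit (R := R) h))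
    (hιΔ : ∀ h : H, Coalgebra.comul (R := Rq) (ι h) = ιι (Coalgebra.comul (R := R) h))
    (c : Hq ⊗[Rq] Hq) (hsymm : tau Rq Hq c = c)
    (hcocycle : idTensorComul Rq Hq c + incl23 Rq Hq c
      - comulLeftTensor Rq Hq c - incl12 Rq Hq c = 0)
    (hcounit₁ : idCounit Rq Hq c = 0) (hcounit₂ : counitId Rq Hq c = 0) :
    UnitAxiom Rq Hq (MvPowerSeries.C (σ := Fin 2) (R := Hq ⊗[Rq] Hq) c
        + MvPowerSeries.X 0 + MvPowerSeries.X 1) ∧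
    AssocAxiom Rq Hq (MvPowerSeries.C (σ := Fin 2) (R := Hq ⊗[Rq] Hq) c
        + MvPowerSeries.X 0 + MvPowerSeries.X 1) ∧
    CommAxiom Rq Hq (MvPowerSeries.C (σ := Fin 2) (R := Hq ⊗[Rq] Hq) c
        + MvPowerSeries.X 0 + MvPowerSeries.X 1) := by
  classical
  have h2 : idTensorComul Rq Hq c + incl23 Rq Hq c
      = comulLeftTensor Rq Hq c + incl12 Rq Hq c := by
    have h' := hcocycle
    rw [sub_sub, sub_eq_zero] at h'
    exact h'
  refine ⟨⟨?_, ?_⟩, ?_, ?_⟩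
  · intro n
    rw [coeffFun (MvPowerSeries.C (σ := Fin 2) (R := Hq ⊗[Rq] Hq) c
      + MvPowerSeries.X 0 + MvPowerSeries.X 1), coeff_CXX]
    simp only [Finsupp.single_eq_zero, Finsupp.single_eq_single_iff]
    simp [map_add, apply_ite (⇑(idCounit Rq Hq)), map_zero, hcounit₁, idCounit_one]
  · intro n
    rw [coeffFun (MvPowerSeries.C (σ := Fin 2) (R := Hq ⊗[Rq] Hq) c
      + MvPowerSeries.X 0 + MvPowerSeries.X 1), coeff_CXX]
    simp only [Finsupp.single_eq_zero, Finsupp.single_eq_single_iff]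
    simp [map_add, apply_ite (⇑(counitId Rq Hq)), map_zero, hcounit₂, counitId_one]
  · unfold AssocAxiom
    have e1 : mapCoeffs (⇑(comulLeftTensor Rq Hq))
          (MvPowerSeries.C (σ := Fin 2) (R := Hq ⊗[Rq] Hq) c + MvPowerSeries.X 0 + MvPowerSeries.X 1)
        = MvPowerSeries.C (σ := Fin 2) (comulLeftTensor Rq Hq c)
          + MvPowerSeries.X 0 + MvPowerSeries.X 1 := by
      funext m
      simp only [mapCoeffs, coeffFun, coeff_CXX]
      simp [map_add, apply_ite (⇑(comulLeftTensor Rq Hq)), map_zero, comulLeftTensor_one]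
    have e2 : mapCoeffs (⇑(idTensorComul Rq Hq))
          (MvPowerSeries.C (σ := Fin 2) (R := Hq ⊗[Rq] Hq) c + MvPowerSeries.X 0 + MvPowerSeries.X 1)
        = MvPowerSeries.C (σ := Fin 2) (idTensorComul Rq Hq c)
          + MvPowerSeries.X 0 + MvPowerSeries.X 1 := by
      funext m
      simp only [mapCoeffs, coeffFun, coeff_CXX]
      simp [map_add, apply_ite (⇑(idTensorComul Rq Hq)), map_zero, idTensorComul_one]
    have e3 : emb12 (⇑(incl12 Rq Hq))
          (MvPowerSeries.C (σ := Fin 2) (R := Hq ⊗[Rq] Hq) c + MvPowerSeries.X 0 + MvPowerSeries.X 1)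
        = MvPowerSeries.C (σ := Fin 3) (incl12 Rq Hq c)
          + MvPowerSeries.X 0 + MvPowerSeries.X 1 := by
      funext m
      simp only [emb12, coeffFun, coeff_CXX]
      by_cases hm : m 2 = 0
      · simp [hm, map_add, apply_ite (⇑(incl12 Rq Hq)), map_zero, incl12_one,
          pair_eq_zero, pair_eq_s0, pair_eq_s1, fin3_eq_zero, fin3_eq_s0, fin3_eq_s1]
      · simp [hm, fin3_eq_zero, fin3_eq_s0, fin3_eq_s1]
    have e4 : emb23 (⇑(incl23 Rq Hq))
          (MvPowerSeries.C (σ := Fin 2) (R := Hq ⊗[Rq] Hq) c + MvPowerSeries.X 0 + MvPowerSeries.X 1)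
        = MvPowerSeries.C (σ := Fin 3) (incl23 Rq Hq c)
          + MvPowerSeries.X 1 + MvPowerSeries.X 2 := by
      funext m
      simp only [emb23, coeffFun, coeff_CXX]
      by_cases hm : m 0 = 0
      · simp [hm, map_add, apply_ite (⇑(incl23 Rq Hq)), map_zero, incl23_one,
          pair_eq_zero, pair_eq_s0, pair_eq_s1, fin3_eq_zero, fin3_eq_s1, fin3_eq_s2]
      · simp [hm, fin3_eq_zero, fin3_eq_s1, fin3_eq_s2]
    rw [e1, e2, e3, e4]
    funext m
    rw [subst2_CXX, subst2_CXX, coeff_CXX, coeff_CXX, MvPowerSeries.coeff_one,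
      MvPowerSeries.coeff_X, MvPowerSeries.coeff_X]
    by_cases h : m = 0
    · simp [h, fin3_eq_zero, fin3_eq_s0, fin3_eq_s1, fin3_eq_s2]
      exact h2.symm
    · simp [h]
      exact add_assoc _ _ _
  · intro m
    simp only [coeffFun, coeff_CXX]
    simp [map_add, apply_ite (⇑(tau Rq Hq)), map_zero, hsymm, tau_one,
      fin2_eq_zero, fin2_eq_s0, fin2_eq_s1, pair_eq_zero, pair_eq_s0, pair_eq_s1,
      and_comm]
    ring


end FGHopf
end
end

section
/- Let c ∈ H_ℚ ⊗̂_{R_ℚ} H_ℚ be symmetric (τ(c) = c) and satisfy (id ⊗ ε)c = 0 = (ε ⊗ id)c, and let 𝔊 denote the series c + x⊗1 + 1⊗x. Then the series Θ(x) = −(μ ∘ (id ⊗ S))(c) − x ∈ H_ℚ[[x]] is an inverse element for 𝔊: both ((μ ∘ (id ⊗ S))𝔊)(x, Θ(x)) = 0 and ((μ ∘ (S ⊗ id))𝔊)(Θ(x), x) = 0, where (μ ∘ (id ⊗ S))𝔊 (respectively (μ ∘ (S ⊗ id))𝔊) denotes the one-variable-pair series obtained by applying μ ∘ (id ⊗ S)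 (respectively μ ∘ (S ⊗ id)) to all coefficients of 𝔊; in particular (μ ∘ (id ⊗ S))(c) = (μ ∘ (S ⊗ id))(c). -/
open scoped TensorProduct

noncomputable section

namespace FGHopf

variable {A B : Type*} [CommRing A] [CommRing B] {σ : Type*}

variable (R : Type*) [CommRing R] (H : Type*) [CommRing H] [HopfAlgebra R H]

section Aux

variable {A B : Type*} [CommRing A] [CommRing B] {σ : Type*}

lemma pair_eq_s2 (p : ℕ × ℕ) (q : ℕ × ℕ) :
    (Finsupp.single (0 : Fin 2) p.1 + Finsupp.single 1 p.2 =
      Finsupp.single 0 q.1 + Finsupp.single 1 q.2) ↔ p = q := by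
  constructor
  · intro h
    have h0 := DFunLike.congr_fun h 0
    have h1 := DFunLike.congr_fun h 1
    simp [Finsupp.single_apply] at h0 h1
    exact Prod.ext h0 h1
  · rintro rfl; rfl

lemma subst2_aff (a : A) (G K : MvPowerSeries σ A) :
    subst2 (MvPowerSeries.C (σ := Fin 2) (R := A) a + MvPowerSeries.X 0 + MvPowerSeries.X 1) G K
      = MvPowerSeries.C (σ := σ) (R := A) a + G + K := by
  classical
  ext m
  have hw : ∀ p : ℕ × ℕ,
      MvPowerSeries.coeff (R := A) (Finsupp.single 0 p.1 + Finsupp.single 1 p.2)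
        (MvPowerSeries.C (σ := Fin 2) (R := A) a + MvPowerSeries.X 0 + MvPowerSeries.X 1)
      = (if p = (0,0) then a else 0) + (if p = (1,0) then 1 else 0)
        + (if p = (0,1) then 1 else 0) := by
    intro p
    rw [map_add, map_add, MvPowerSeries.coeff_C, MvPowerSeries.coeff_X,
      MvPowerSeries.coeff_X]
    congr 1
    · congr 1
      · have : (Finsupp.single (0:Fin 2) p.1 + Finsupp.single 1 p.2 = 0)
            ↔ p = (0,0) := by
          rw [show (0 : Fin 2 →₀ ℕ) = Finsupp.single 0 (0:ℕ) + Finsupp.single 1 0 by simp]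
          exact pair_eq_s2 p (0,0)
        simp only [this]
      · have : (Finsupp.single (0:Fin 2) p.1 + Finsupp.single 1 p.2 = Finsupp.single 0 1)
            ↔ p = (1,0) := by
          rw [show (Finsupp.single (0:Fin 2) 1) = Finsupp.single 0 1 + Finsupp.single 1 0 by simp]
          exact pair_eq_s2 p (1,0)
        simp only [this]
    · have : (Finsupp.single (0:Fin 2) p.1 + Finsupp.single 1 p.2 = Finsupp.single 1 1)
          ↔ p = (0,1) := by
        rw [show (Finsupp.single (1:Fin 2) 1) = Finsupp.single 0 0 + Finsupp.single 1 1 by simp]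
        exact pair_eq_s2 p (0,1)
      simp only [this]
  show (∑ᶠ p : ℕ × ℕ, _) = _
  rw [finsum_eq_finset_sum_of_support_subset _
    (s := ({(0,0),(1,0),(0,1)} : Finset (ℕ × ℕ)))]
  · rw [Finset.sum_insert (by decide), Finset.sum_insert (by decide),
      Finset.sum_singleton]
    simp only [hw]
    norm_num
    simp only [MvPowerSeries.coeff_C, MvPowerSeries.coeff_X, MvPowerSeries.coeff_one,
      Finsupp.single_eq_single_iff, map_add]
    norm_num
    ring
  · intro p hp
    simp only [Function.mem_support, ne_eq] at hp
    by_contra hmem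
    simp only [Finset.coe_insert, Finset.coe_singleton, Set.mem_insert_iff,
      Set.mem_singleton_iff] at hmem
    push_neg at hmem
    apply hp
    rw [hw, if_neg hmem.1, if_neg hmem.2.1, if_neg hmem.2.2]
    ring

end Aux

/-- for symmetric `c` with `(id⊗ε)c = 0 = (ε⊗id)c`, the series
`Θ(x) = −(μ∘(id⊗S))(c) − x` is an inverse element for `𝔊 = c + x⊗1 + 1⊗x`, and
`(μ∘(id⊗S))(c) = (μ∘(S⊗id))(c)`. -/
theorem stmt2
    (R : Type*) [CommRing R] [NoZeroSMulDivisors ℤ R]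
    (H : Type*) [CommRing H] [HopfAlgebra R H]
    (Rq : Type*) [CommRing Rq] [Algebra ℚ Rq]
    (Hq : Type*) [CommRing Hq] [HopfAlgebra Rq Hq] [Algebra ℚ Hq]
    [IsScalarTower ℚ Rq Hq]
    (ιR : R →+* Rq) (ι : H →+* Hq) (ιι : H ⊗[R] H →+* Hq ⊗[Rq] Hq)
    (halg : ∀ r : R, ι (algebraMap R H r) = algebraMap Rq Hq (ιR r))
    (hιι : ∀ h k : H, ιι (h ⊗ₜ[R] k) = ι h ⊗ₜ[Rq] ι k)
    (hιε : ∀ h : H, Coalgebra.counit (R := Rq) (ι h) = ιR (Coalgebra.counit (R := R) h))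
    (hιΔ : ∀ h : H, Coalgebra.comul (R := Rq) (ι h) = ιι (Coalgebra.comul (R := R) h))
    (c : Hq ⊗[Rq] Hq) (hsymm : tau Rq Hq c = c)
    (hcounit₁ : idCounit Rq Hq c = 0) (hcounit₂ : counitId Rq Hq c = 0)
    (G : MvPowerSeries (Fin 2) (Hq ⊗[Rq] Hq))
    (hG : G = MvPowerSeries.C (σ := Fin 2) (R := Hq ⊗[Rq] Hq) c
        + MvPowerSeries.X 0 + MvPowerSeries.X 1)
    (muS muS' : Hq ⊗[Rq] Hq →ₗ[Rq] Hq)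
    (hmuS : muS = LinearMap.mul' Rq Hq ∘ₗ
      LinearMap.lTensor Hq (HopfAlgebra.antipode (R := Rq)))
    (hmuS' : muS' = LinearMap.mul' Rq Hq ∘ₗ
      LinearMap.rTensor Hq (HopfAlgebra.antipode (R := Rq)))
    (Θ : PowerSeries Hq)
    (hΘ : Θ = -(PowerSeries.C (R := Hq) (muS c)) - PowerSeries.X) :
    subst2 (mapCoeffs (⇑muS) G) (PowerSeries.X : PowerSeries Hq) Θ = 0 ∧
    subst2 (mapCoeffs (⇑muS') G) Θ (PowerSeries.X : PowerSeries Hq) = 0 ∧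
    muS c = muS' c := by
  classical
  have hS1 : HopfAlgebra.antipode (R := Rq) (1 : Hq) = 1 := by
    have h := HopfAlgebra.mul_antipode_lTensor_comul_apply (R := Rq) (1 : Hq)
    rw [Bialgebra.comul_one, Bialgebra.counit_one] at h
    rw [Algebra.TensorProduct.one_def, LinearMap.lTensor_tmul,
      LinearMap.mul'_apply, one_mul] at h
    simpa using h
  have hmuS1 : muS (1 : Hq ⊗[Rq] Hq) = 1 := by
    rw [hmuS, Algebra.TensorProduct.one_def]
    simp [hS1]
  have hmuS'1 : muS' (1 : Hq ⊗[Rq] Hq) = 1 := by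
    rw [hmuS', Algebra.TensorProduct.one_def]
    simp [hS1]
  have hcc : muS c = muS' c := by
    have hext : muS' = muS ∘ₗ tau Rq Hq := by
      apply TensorProduct.ext'
      intro h k
      simp [hmuS, hmuS', tau, mul_comm]
    rw [hext, LinearMap.comp_apply, hsymm]
  have hmap : ∀ (f : Hq ⊗[Rq] Hq →ₗ[Rq] Hq), f 1 = 1 →
      mapCoeffs ⇑f G = MvPowerSeries.C (σ := Fin 2) (R := Hq) (f c)
        + MvPowerSeries.X 0 + MvPowerSeries.X 1 := by
    intro f hf1
    ext m
    show f (MvPowerSeries.coeff m G) = _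
    simp only [hG, map_add, MvPowerSeries.coeff_C, MvPowerSeries.coeff_X,
      apply_ite f, map_zero, hf1]
  have hΘ0 : (MvPowerSeries.C (σ := Unit) (R := Hq) (muS c)
      + (PowerSeries.X : PowerSeries Hq) + Θ) = 0 := by
    rw [hΘ]
    show MvPowerSeries.C (σ := Unit) (R := Hq) (muS c) + PowerSeries.X
      + (-(MvPowerSeries.C (σ := Unit) (R := Hq) (muS c)) - PowerSeries.X) = 0
    ring
  refine ⟨?_, ?_, hcc⟩
  · rw [hmap muS hmuS1, subst2_aff]
    exact hΘ0
  · rw [hmap muS' hmuS'1, subst2_aff, ← hcc]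
    rw [show MvPowerSeries.C (σ := Unit) (R := Hq) (muS c) + Θ + PowerSeries.X
      = MvPowerSeries.C (σ := Unit) (R := Hq) (muS c) + PowerSeries.X + Θ by ring]
    exact hΘ0


end FGHopf
end
end
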